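/- For $0 < q < 1$, the Jacobi theta null values satisfy $\theta_3(0|\tau)\,\theta_4(0|\tau) = \theta_4(0|2\tau)^2$, i.e., with $q = e^{\pi i \tau}$, $\Big(1+2\sum_{n\ge1} q^{n^2}\Big)\Big(1+2\sum_{n\ge1}(-1)^n q^{n^2}\Big) = \Big(1+2\sum_{n\ge1}(-1)^n q^{2n^2}\Big)^2$. -/

import Mathlib

noncomputable section
namespace Stmt8Aux

def F (s q : ℝ) (n : ℤ) : ℝ := s ^ n.natAbs * q ^ (n.natAbs ^ 2)

lemma norm_F {s : ℝ} (q : ℝ) (hs : |s| = 1) (hq : 0 ≤ q) (n : ℤ) :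
    ‖F s q n‖ = q ^ (n.natAbs ^ 2) := by
  rw [F, Real.norm_eq_abs, abs_mul, abs_pow, abs_pow, hs, one_pow, one_mul,
    abs_of_nonneg hq]

lemma summable_q {q : ℝ} (hq0 : 0 < q) (hq1 : q < 1) :
    Summable (fun n : ℕ => q ^ (n ^ 2)) :=
  Summable.of_nonneg_of_le (fun n => by positivity)
    (fun n => pow_le_pow_of_le_one hq0.le hq1.le (Nat.le_self_pow two_ne_zero n))
    (summable_geometric_of_lt_one hq0.le hq1)

lemma summable_norm_F {s q : ℝ} (hs : |s| = 1) (hq0 : 0 < q) (hq1 : q < 1) :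
    Summable (fun n : ℤ => ‖F s q n‖) := by
  simp only [norm_F q hs hq0.le]
  apply Summable.of_nat_of_neg <;> simpa using summable_q hq0 hq1

lemma summable_F {s q : ℝ} (hs : |s| = 1) (hq0 : 0 < q) (hq1 : q < 1) :
    Summable (F s q) :=
  (summable_norm_F hs hq0 hq1).of_norm

lemma sign_mul (x y : ℤ) :
    ((-1:ℝ)) ^ (x + y).natAbs = (-1:ℝ) ^ x.natAbs * (-1:ℝ) ^ y.natAbs := by
  rcases Int.even_or_odd x with hx | hx <;> rcases Int.even_or_odd y with hy | hy
  · rw [(Int.natAbs_even.mpr (hx.add hy)).neg_one_pow,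
      (Int.natAbs_even.mpr hx).neg_one_pow, (Int.natAbs_even.mpr hy).neg_one_pow]; ring
  · rw [(Int.natAbs_odd.mpr (hx.add_odd hy)).neg_one_pow,
      (Int.natAbs_even.mpr hx).neg_one_pow, (Int.natAbs_odd.mpr hy).neg_one_pow]; ring
  · rw [(Int.natAbs_odd.mpr (hx.add_even hy)).neg_one_pow,
      (Int.natAbs_odd.mpr hx).neg_one_pow, (Int.natAbs_even.mpr hy).neg_one_pow]; ring
  · rw [(Int.natAbs_even.mpr (hx.add_odd hy)).neg_one_pow,
      (Int.natAbs_odd.mpr hx).neg_one_pow, (Int.natAbs_odd.mpr hy).neg_one_pow]; ring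

def evenSet : Set (ℤ × ℤ) := {z | Even (z.1 + z.2)}

def evenEquiv : (ℤ × ℤ) ≃ evenSet where
  toFun ab := ⟨(ab.1 + ab.2, ab.1 - ab.2), ⟨ab.1, by ring⟩⟩
  invFun z := ((z.1.1 + z.1.2) / 2, (z.1.1 - z.1.2) / 2)
  left_inv ab := by
    obtain ⟨a, b⟩ := ab
    dsimp
    rw [Prod.mk.injEq]
    constructor <;> omega
  right_inv z := by
    obtain ⟨⟨m, n⟩, r, hr⟩ := z
    apply Subtype.ext
    dsimp
    rw [Prod.mk.injEq]
    constructor <;> omega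

def oddSwap : ↥(evenSetᶜ) ≃ ↥(evenSetᶜ) :=
  (Equiv.prodComm ℤ ℤ).subtypeEquiv (fun z => by simp [evenSet, add_comm])

lemma key {q : ℝ} (hq0 : 0 < q) (hq1 : q < 1) :
    (∑' m : ℤ, F 1 q m) * (∑' n : ℤ, F (-1) q n)
      = (∑' a : ℤ, F (-1) (q ^ 2) a) ^ 2 := by
  have h1 : |(1:ℝ)| = 1 := abs_one
  have hm1 : |(-1:ℝ)| = 1 := by norm_num
  have hq20 : 0 < q ^ 2 := by positivity
  have hq21 : q ^ 2 < 1 := by nlinarith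
  have hA := summable_norm_F h1 hq0 hq1
  have hB := summable_norm_F hm1 hq0 hq1
  have hC := summable_norm_F hm1 hq20 hq21
  set G : ℤ × ℤ → ℝ := fun z => F 1 q z.1 * F (-1) q z.2 with hGdef
  have hG : Summable G := summable_mul_of_summable_norm hA hB
  rw [tsum_mul_tsum_of_summable_norm hA hB]
  -- split into even and odd part
  rw [← Summable.tsum_subtype_add_tsum_subtype_compl hG evenSet]
  -- odd part is zero
  have hodd : ∑' z : ↥(evenSetᶜ), G ↑z = 0 := by
    have he : ∀ z : ↥(evenSetᶜ), G ↑(oddSwap z) = - G ↑z := by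
      rintro ⟨⟨m, n⟩, hz⟩
      have hmn : Odd (m + n) := Int.not_even_iff_odd.mp hz
      have hsm : (-1:ℝ) ^ m.natAbs * (-1:ℝ) ^ n.natAbs = -1 := by
        rw [← sign_mul, (Int.natAbs_odd.mpr hmn).neg_one_pow]
      have hB2 : ((-1:ℝ) ^ n.natAbs) * ((-1:ℝ) ^ n.natAbs) = 1 := by
        rw [← pow_add, (by omega : n.natAbs + n.natAbs = 2 * n.natAbs), pow_mul,
          neg_one_sq, one_pow]
      have hsgn : (-1:ℝ) ^ m.natAbs = -(-1:ℝ) ^ n.natAbs := by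
        linear_combination ((-1:ℝ) ^ n.natAbs) * hsm - ((-1:ℝ) ^ m.natAbs) * hB2
      show F 1 q n * F (-1) q m = -(F 1 q m * F (-1) q n)
      simp only [F, one_pow, hsgn]
      ring
    have h := Equiv.tsum_eq oddSwap (fun z : ↥(evenSetᶜ) => G ↑z)
    simp only [he] at h
    rw [tsum_neg] at h
    linarith
  rw [hodd, add_zero]
  -- even part
  have heq : ∀ ab : ℤ × ℤ,
      G ↑(evenEquiv ab) = F (-1) (q ^ 2) ab.1 * F (-1) (q ^ 2) ab.2 := by
    rintro ⟨a, b⟩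
    show F 1 q (a + b) * F (-1) q (a - b) = F (-1) (q ^ 2) a * F (-1) (q ^ 2) b
    have hexp : (a + b).natAbs ^ 2 + (a - b).natAbs ^ 2
        = 2 * a.natAbs ^ 2 + 2 * b.natAbs ^ 2 := by
      have : (((a + b).natAbs ^ 2 + (a - b).natAbs ^ 2 : ℕ) : ℤ)
          = ((2 * a.natAbs ^ 2 + 2 * b.natAbs ^ 2 : ℕ) : ℤ) := by
        push_cast [Int.natAbs_sq]
        simp only [sq_abs]
        ring
      exact_mod_cast this
    have hsgn : (-1:ℝ) ^ (a - b).natAbs = (-1:ℝ) ^ a.natAbs * (-1:ℝ) ^ b.natAbs := by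
      rw [sub_eq_add_neg, sign_mul, Int.natAbs_neg]
    simp only [F, one_pow, one_mul, hsgn]
    rw [show q ^ (a + b).natAbs ^ 2 * ((-1:ℝ) ^ a.natAbs * (-1:ℝ) ^ b.natAbs
        * q ^ (a - b).natAbs ^ 2)
      = (-1:ℝ) ^ a.natAbs * (-1:ℝ) ^ b.natAbs
        * (q ^ (a + b).natAbs ^ 2 * q ^ (a - b).natAbs ^ 2) from by ring,
      ← pow_add q, hexp, pow_add q, pow_mul q 2 (a.natAbs ^ 2), pow_mul q 2 (b.natAbs ^ 2)]
    ring
  have h2 := Equiv.tsum_eq evenEquiv (fun z : ↥evenSet => G ↑z)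
  rw [← h2]
  simp only [heq]
  rw [← tsum_mul_tsum_of_summable_norm hC hC]
  ring
lemma F_natSucc (s q : ℝ) (n : ℕ) :
    F s q ((n : ℤ) + 1) = s ^ (n + 1) * q ^ ((n + 1) ^ 2) := by
  have : ((n : ℤ) + 1).natAbs = n + 1 := by omega
  rw [F, this]

lemma tsum_F {s q : ℝ} (hs : |s| = 1) (hq0 : 0 < q) (hq1 : q < 1) :
    ∑' n : ℤ, F s q n = 1 + 2 * ∑' n : ℕ, s ^ (n + 1) * q ^ ((n + 1) ^ 2) := by
  have h1 : Summable fun n : ℕ => F s q ((n : ℤ) + 1) :=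
    (summable_F hs hq0 hq1).comp_injective (fun a b h => by omega)
  have h2 : Summable fun n : ℕ => F s q (-((n : ℤ) + 1)) := by
    simpa only [F, Int.natAbs_neg] using h1
  rw [tsum_of_add_one_of_neg_add_one h1 h2]
  have h3 : ∀ n : ℕ, F s q (-((n : ℤ) + 1)) = F s q ((n : ℤ) + 1) := fun n => by
    rw [F, F, Int.natAbs_neg]
  have h0 : F s q 0 = 1 := by simp [F]
  simp only [h3, F_natSucc, h0]
  ring


end Stmt8Aux

theorem stmt8 (q : ℝ) (hq0 : 0 < q) (hq1 : q < 1) :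
    (1 + 2 * ∑' n : ℕ, q ^ ((n + 1) ^ 2)) *
        (1 + 2 * ∑' n : ℕ, (-1 : ℝ) ^ (n + 1) * q ^ ((n + 1) ^ 2)) =
      (1 + 2 * ∑' n : ℕ, (-1 : ℝ) ^ (n + 1) * (q ^ 2) ^ ((n + 1) ^ 2)) ^ 2 := by
  have h1 : |(1:ℝ)| = 1 := abs_one
  have hm1 : |(-1:ℝ)| = 1 := by norm_num
  have hq20 : 0 < q ^ 2 := by positivity
  have hq21 : q ^ 2 < 1 := by nlinarith
  have e3 : (1 + 2 * ∑' n : ℕ, q ^ ((n + 1) ^ 2)) = ∑' m : ℤ, Stmt8Aux.F 1 q m := by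
    rw [Stmt8Aux.tsum_F h1 hq0 hq1]
    simp only [one_pow, one_mul]
  have e4 : (1 + 2 * ∑' n : ℕ, (-1 : ℝ) ^ (n + 1) * q ^ ((n + 1) ^ 2))
      = ∑' n : ℤ, Stmt8Aux.F (-1) q n := (Stmt8Aux.tsum_F hm1 hq0 hq1).symm
  have e5 : (1 + 2 * ∑' n : ℕ, (-1 : ℝ) ^ (n + 1) * (q ^ 2) ^ ((n + 1) ^ 2))
      = ∑' n : ℤ, Stmt8Aux.F (-1) (q ^ 2) n := (Stmt8Aux.tsum_F hm1 hq20 hq21).symm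
  rw [e3, e4, e5, Stmt8Aux.key hq0 hq1]
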